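/- For every μ > 0, the function g : ℝ → ℝ defined by g(x) = e^{x/2} W_{−1/2, μ}(2 e^{−x}) is twice differentiable and satisfies g''(x) = (e^{−x} + e^{−2x} + μ²) g(x) for all x ∈ ℝ. -/

import Mathlib

open Real

/-- The Whittaker function
`W_{k,μ}(z) = (z^k e^{-z/2} / Γ(1/2 + μ - k)) ∫_0^∞ e^{-t} t^{μ-k-1/2} (1 + t/z)^{μ+k-1/2} dt`. -/
noncomputable def whittakerW (k μ z : ℝ) : ℝ :=
  z ^ k * Real.exp (-z / 2) / Real.Gamma (1 / 2 + μ - k) *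
    ∫ t in Set.Ioi (0 : ℝ),
      Real.exp (-t) * t ^ (μ - k - 1 / 2) * (1 + t / z) ^ (μ + k - 1 / 2)

open MeasureTheory Set Filter

namespace WhitAux

noncomputable def J (a b z : ℝ) : ℝ :=
  ∫ t in Set.Ioi (0:ℝ), Real.exp (-t) * t ^ a * (1 + t / z) ^ b

lemma integrable_majorant {a c : ℝ} (ha : -1 < a) (hc : 0 ≤ c) :
    IntegrableOn (fun t => Real.exp (-t) * t ^ a + Real.exp (-t) * t ^ (a + c))
      (Set.Ioi (0:ℝ)) := by
  have h1 := Real.GammaIntegral_convergent (show (0:ℝ) < a + 1 by linarith)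
  have h2 := Real.GammaIntegral_convergent (show (0:ℝ) < a + c + 1 by linarith)
  rw [show a + 1 - 1 = a by ring] at h1
  rw [show a + c + 1 - 1 = a + c by ring] at h2
  exact h1.add h2

lemma rpow_base_bound {u C : ℝ} (b : ℝ) (hu : 1 ≤ u) (huC : u ≤ C) : u ^ b ≤ C ^ |b| :=
  (Real.rpow_le_rpow_of_exponent_le hu (le_abs_self b)).trans
    (Real.rpow_le_rpow (by linarith) huC (abs_nonneg b))

lemma pt_bound {a z t : ℝ} (b : ℝ) (hz : 0 < z) (ht : 0 < t) :
    Real.exp (-t) * t ^ a * (1 + t / z) ^ b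
      ≤ ((1 + 1/z) * 2) ^ |b| * (Real.exp (-t) * t ^ a + Real.exp (-t) * t ^ (a + |b|)) := by
  have hzinv : 0 < z⁻¹ := by positivity
  have hM1 : (1:ℝ) ≤ max 1 t := le_max_left _ _
  have hMt : t ≤ max 1 t := le_max_right _ _
  have hu : (1:ℝ) ≤ 1 + t / z := by
    have : 0 < t / z := div_pos ht hz
    linarith
  have hbase : 1 + t / z ≤ (1 + 1/z) * 2 * max 1 t := by
    rw [div_eq_mul_inv, one_div]
    nlinarith
  have h1 : (1 + t / z) ^ b ≤ ((1 + 1/z) * 2 * max 1 t) ^ |b| :=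
    rpow_base_bound b hu hbase
  have h2 : ((1 + 1/z) * 2 * max 1 t) ^ |b|
      = ((1 + 1/z) * 2) ^ |b| * (max 1 t) ^ |b| :=
    Real.mul_rpow (by positivity) (by positivity)
  have h3 : (max 1 t) ^ |b| ≤ 1 + t ^ |b| := by
    rcases le_total t 1 with h | h
    · rw [max_eq_left h, Real.one_rpow]
      have : 0 ≤ t ^ |b| := Real.rpow_nonneg ht.le _
      linarith
    · rw [max_eq_right h]
      have : 0 ≤ t ^ |b| := Real.rpow_nonneg ht.le _
      linarith
  have hD : (0:ℝ) ≤ ((1 + 1/z) * 2) ^ |b| := Real.rpow_nonneg (by positivity) _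
  have hpre : 0 ≤ Real.exp (-t) * t ^ a := by positivity
  calc Real.exp (-t) * t ^ a * (1 + t / z) ^ b
      ≤ Real.exp (-t) * t ^ a * (((1 + 1/z) * 2) ^ |b| * (1 + t ^ |b|)) := by
        apply mul_le_mul_of_nonneg_left _ hpre
        calc (1 + t / z) ^ b ≤ ((1 + 1/z) * 2) ^ |b| * (max 1 t) ^ |b| := h2 ▸ h1
          _ ≤ ((1 + 1/z) * 2) ^ |b| * (1 + t ^ |b|) :=
            mul_le_mul_of_nonneg_left h3 hD
    _ = ((1 + 1/z) * 2) ^ |b| * (Real.exp (-t) * t ^ a + Real.exp (-t) * t ^ (a + |b|)) := by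
        rw [Real.rpow_add ht a |b|]; ring

lemma contOn (a b z : ℝ) (hz : 0 < z) :
    ContinuousOn (fun t : ℝ => Real.exp (-t) * t ^ a * (1 + t / z) ^ b) (Set.Ioi 0) := by
  apply ContinuousOn.mul
  · apply ContinuousOn.mul
    · exact (Real.continuous_exp.comp continuous_neg).continuousOn
    · exact ContinuousOn.rpow_const continuousOn_id fun t ht => Or.inl (ne_of_gt ht)
  · apply ContinuousOn.rpow_const
    · fun_prop
    · intro t ht
      have h1 : 0 < t / z := div_pos ht hz
      exact Or.inl (by linarith)

lemma integrableJ (a b z : ℝ) (ha : -1 < a) (hz : 0 < z) :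
    IntegrableOn (fun t => Real.exp (-t) * t ^ a * (1 + t / z) ^ b) (Set.Ioi (0:ℝ)) := by
  apply Integrable.mono'
    ((integrable_majorant ha (abs_nonneg b)).const_mul (((1 + 1/z) * 2) ^ |b|))
    ((contOn a b z hz).aestronglyMeasurable measurableSet_Ioi)
  rw [ae_restrict_iff' measurableSet_Ioi]
  filter_upwards with t ht
  have h1 : 0 < t / z := div_pos ht hz
  have hnn : 0 ≤ Real.exp (-t) * t ^ a * (1 + t / z) ^ b :=
    mul_nonneg (mul_nonneg (Real.exp_pos _).le (Real.rpow_nonneg (le_of_lt ht) _))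
      (Real.rpow_nonneg (by linarith) _)
  rw [Real.norm_eq_abs, abs_of_nonneg hnn]
  exact pt_bound b hz ht

lemma hasDerivAt_J (a b : ℝ) (ha : -1 < a) {z : ℝ} (hz : 0 < z) :
    HasDerivAt (fun y => J a b y) (-(b / z^2) * J (a+1) (b-1) z) z := by
  have hz2 : 0 < z/2 := by linarith
  have key := hasDerivAt_integral_of_dominated_loc_of_deriv_le
      (F := fun (y : ℝ) (t : ℝ) => Real.exp (-t) * t ^ a * (1 + t / y) ^ b)
      (F' := fun (y : ℝ) (t : ℝ) =>
        Real.exp (-t) * t ^ a * (t * -((y^2)⁻¹) * b * (1 + t / y) ^ (b - 1)))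
      (x₀ := z) (μ := volume.restrict (Set.Ioi 0))
      (bound := fun t =>
        |b| * ((z^2)⁻¹ * 4) * (Real.exp (-t) * t ^ (a+1) * (1 + t / (z/2)) ^ |b - 1|))
      (Metric.ball_mem_nhds z hz2) ?_ (integrableJ a b z ha hz) ?_ ?_ ?_ ?_
  · -- conclude
    have heq : (∫ t in Set.Ioi (0:ℝ),
        Real.exp (-t) * t ^ a * (t * -((z^2)⁻¹) * b * (1 + t / z) ^ (b - 1)))
        = -(b / z^2) * J (a+1) (b-1) z := by
      rw [J, ← MeasureTheory.integral_const_mul]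
      apply setIntegral_congr_fun measurableSet_Ioi
      intro t ht
      simp only
      rw [Real.rpow_add_one (ne_of_gt ht) a]
      ring
    have h2 := key.2
    rw [heq] at h2
    exact h2
  · -- F y measurable for y near z
    filter_upwards [Ioi_mem_nhds hz] with y hy
    exact (integrableJ a b y ha hy).aestronglyMeasurable
  · -- F' z measurable
    show AEStronglyMeasurable
      (fun t : ℝ => Real.exp (-t) * t ^ a * (t * -((z^2)⁻¹) * b * (1 + t / z) ^ (b - 1)))
      (volume.restrict (Set.Ioi 0))
    have : (fun t => Real.exp (-t) * t ^ a * (t * -((z^2)⁻¹) * b * (1 + t / z) ^ (b - 1)))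
        = fun t => (Real.exp (-t) * t ^ a * (1 + t / z) ^ (b-1)) * (t * -((z^2)⁻¹) * b) := by
      funext t; ring
    rw [this]
    exact (((contOn a (b-1) z hz).mul (by fun_prop)).aestronglyMeasurable measurableSet_Ioi)
  · -- bound
    rw [ae_restrict_iff' measurableSet_Ioi]
    filter_upwards with t ht
    intro y hy
    have hyz : |y - z| < z/2 := by rwa [Metric.mem_ball, Real.dist_eq] at hy
    have hy2 : z/2 < y := by cases' abs_lt.mp hyz with h1 h2; linarith
    have hy0 : 0 < y := lt_trans hz2 hy2
    have ht0 : (0:ℝ) < t := ht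
    have hu1 : (1:ℝ) ≤ 1 + t / y := by
      have : 0 < t / y := div_pos ht0 hy0
      linarith
    have hrb : (1 + t / y) ^ (b-1) ≤ (1 + t / (z/2)) ^ |b - 1| := by
      apply rpow_base_bound
      · exact hu1
      · have : t / y ≤ t / (z/2) := div_le_div_of_nonneg_left ht0.le hz2 hy2.le
        linarith
    have hinv : (y^2)⁻¹ ≤ (z^2)⁻¹ * 4 := by
      have h1 : (z/2)^2 ≤ y^2 := by nlinarith
      have h2 : (y^2)⁻¹ ≤ ((z/2)^2)⁻¹ := by
        apply inv_anti₀ (by positivity) h1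
      have h3 : ((z/2)^2)⁻¹ = (z^2)⁻¹ * 4 := by
        field_simp; ring
      linarith [h3 ▸ h2]
    have habs : ‖Real.exp (-t) * t ^ a * (t * -((y^2)⁻¹) * b * (1 + t / y) ^ (b - 1))‖
        = |b| * (Real.exp (-t) * t ^ (a+1)) * ((y^2)⁻¹ * (1 + t / y) ^ (b - 1)) := by
      rw [Real.norm_eq_abs, abs_mul, abs_mul, abs_mul,
        abs_of_nonneg (Real.exp_pos _).le,
        abs_of_nonneg (Real.rpow_nonneg ht0.le a),
        mul_neg, abs_mul, abs_neg, abs_mul, abs_of_nonneg ht0.le,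
        abs_of_nonneg (inv_nonneg.mpr (sq_nonneg y)),
        abs_of_nonneg (Real.rpow_nonneg (by linarith : (0:ℝ) ≤ 1 + t/y) _),
        Real.rpow_add_one (ne_of_gt ht0) a]
      ring
    have hrew : |b| * ((z^2)⁻¹ * 4) * (Real.exp (-t) * t ^ (a+1) * (1 + t / (z/2)) ^ |b - 1|)
        = |b| * (Real.exp (-t) * t ^ (a+1)) * ((z^2)⁻¹ * 4 * (1 + t / (z/2)) ^ |b - 1|) := by
      ring
    rw [habs, hrew]
    apply mul_le_mul_of_nonneg_left _ (by positivity)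
    apply mul_le_mul hinv hrb (Real.rpow_nonneg (by linarith : (0:ℝ) ≤ 1 + t/y) _)
      (by positivity)
  · -- bound integrable
    exact (integrableJ (a+1) |b-1| (z/2) (by linarith) hz2).const_mul _
  · -- differentiability in y
    rw [ae_restrict_iff' measurableSet_Ioi]
    filter_upwards with t ht
    intro y hy
    have hyz : |y - z| < z/2 := by rwa [Metric.mem_ball, Real.dist_eq] at hy
    have hy2 : z/2 < y := by cases' abs_lt.mp hyz with h1 h2; linarith
    have hy0 : 0 < y := lt_trans hz2 hy2
    have ht0 : (0:ℝ) < t := ht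
    have hu : (0:ℝ) < 1 + t / y := by
      have : 0 < t / y := div_pos ht0 hy0
      linarith
    have hinner : HasDerivAt (fun y : ℝ => 1 + t / y) (t * -((y^2)⁻¹)) y := by
      simpa [div_eq_mul_inv] using ((hasDerivAt_inv (ne_of_gt hy0)).const_mul t).const_add 1
    have := (hinner.rpow_const (p := b) (Or.inl (ne_of_gt hu))).const_mul (Real.exp (-t) * t ^ a)
    convert this using 1

lemma tendsto_zero_atTop (a b z : ℝ) (hz : 0 < z) :
    Tendsto (fun t => Real.exp (-t) * t ^ a * (1 + t / z) ^ b) atTop (nhds 0) := by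
  set D := ((1 + 1/z) * 2) ^ |b| with hD
  have h1 := tendsto_rpow_mul_exp_neg_mul_atTop_nhds_zero a 1 one_pos
  have h2 := tendsto_rpow_mul_exp_neg_mul_atTop_nhds_zero (a + |b|) 1 one_pos
  have h3 : Tendsto (fun t : ℝ =>
      D * (Real.exp (-t) * t ^ a + Real.exp (-t) * t ^ (a + |b|))) atTop (nhds 0) := by
    have := ((h1.add h2).const_mul D)
    simp only [add_zero, mul_zero] at this
    apply this.congr
    intro t
    simp only [neg_mul, one_mul]
    ring
  apply squeeze_zero' ?_ ?_ h3
  · filter_upwards [eventually_gt_atTop (0:ℝ)] with t ht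
    have h4 : 0 < t / z := div_pos ht hz
    exact mul_nonneg (mul_nonneg (Real.exp_pos _).le (Real.rpow_nonneg ht.le _))
      (Real.rpow_nonneg (by linarith) _)
  · filter_upwards [eventually_gt_atTop (0:ℝ)] with t ht
    exact pt_bound b hz ht

lemma ibp (a b z : ℝ) (ha : 0 < a) (hz : 0 < z) :
    J a b z = a * J (a-1) b z + (b / z) * J a (b-1) z := by
  set Φ : ℝ → ℝ := fun t => Real.exp (-t) * t ^ a * (1 + t / z) ^ b with hΦ
  set Φ' : ℝ → ℝ := fun t => -(Real.exp (-t) * t ^ a * (1 + t / z) ^ b)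
      + a * (Real.exp (-t) * t ^ (a-1) * (1 + t / z) ^ b)
      + (b/z) * (Real.exp (-t) * t ^ a * (1 + t / z) ^ (b-1)) with hΦ'
  have hderiv : ∀ t ∈ Set.Ioi (0:ℝ), HasDerivAt Φ (Φ' t) t := by
    intro t ht
    have ht0 : (0:ℝ) < t := ht
    have hu : (0:ℝ) < 1 + t / z := by
      have : 0 < t / z := div_pos ht0 hz
      linarith
    have h1 : HasDerivAt (fun t : ℝ => Real.exp (-t)) (Real.exp (-t) * (-1)) t := by
      simpa using ((hasDerivAt_id t).neg).exp
    have h2 : HasDerivAt (fun t : ℝ => t ^ a) (a * t ^ (a-1)) t :=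
      Real.hasDerivAt_rpow_const (Or.inl (ne_of_gt ht0))
    have h3 : HasDerivAt (fun t : ℝ => (1 + t / z) ^ b)
        (1/z * b * (1 + t / z) ^ (b-1)) t := by
      have hi : HasDerivAt (fun t : ℝ => 1 + t / z) (1/z) t := by
        simpa using ((hasDerivAt_id t).div_const z).const_add 1
      exact hi.rpow_const (p := b) (Or.inl (ne_of_gt hu))
    have := (h1.mul h2).mul h3
    convert this using 1 <;> try rfl
    simp only [hΦ', Pi.mul_apply]
    ring
  have hcont : ContinuousWithinAt Φ (Set.Ici 0) 0 := by
    apply ContinuousAt.continuousWithinAt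
    apply ContinuousAt.mul
    · apply ContinuousAt.mul
      · exact (Real.continuous_exp.comp continuous_neg).continuousAt
      · exact Real.continuousAt_rpow_const 0 a (Or.inr ha.le)
    · apply ContinuousAt.rpow_const
      · fun_prop
      · exact Or.inl (by norm_num)
  have hΦ0 : Φ 0 = 0 := by
    simp [hΦ, Real.zero_rpow (ne_of_gt ha)]
  have htend : Tendsto Φ atTop (nhds 0) := tendsto_zero_atTop a b z hz
  have hint1 := integrableJ a b z (by linarith) hz
  have hint2 := integrableJ (a-1) b z (by linarith) hz
  have hint3 := integrableJ a (b-1) z (by linarith) hz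
  have hintΦ' : IntegrableOn Φ' (Set.Ioi 0) :=
    (hint1.neg.add (hint2.const_mul a)).add (hint3.const_mul (b/z))
  have hFTC := MeasureTheory.integral_Ioi_of_hasDerivAt_of_tendsto hcont hderiv hintΦ' htend
  rw [hΦ0, zero_sub, neg_zero] at hFTC
  have hsplit : ∫ t in Set.Ioi (0:ℝ), Φ' t
      = -(J a b z) + a * J (a-1) b z + (b/z) * J a (b-1) z := by
    simp only [hΦ']
    have e1 : Integrable (fun t => -(Real.exp (-t) * t ^ a * (1 + t / z) ^ b))
        (volume.restrict (Set.Ioi 0)) := hint1.neg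
    have e2 : Integrable (fun t => a * (Real.exp (-t) * t ^ (a-1) * (1 + t / z) ^ b))
        (volume.restrict (Set.Ioi 0)) := hint2.const_mul a
    have e3 : Integrable (fun t => (b/z) * (Real.exp (-t) * t ^ a * (1 + t / z) ^ (b-1)))
        (volume.restrict (Set.Ioi 0)) := hint3.const_mul (b/z)
    have e12 : Integrable (fun t => -(Real.exp (-t) * t ^ a * (1 + t / z) ^ b)
        + a * (Real.exp (-t) * t ^ (a-1) * (1 + t / z) ^ b))
        (volume.restrict (Set.Ioi 0)) := e1.add e2
    rw [MeasureTheory.integral_add e12 e3, MeasureTheory.integral_add e1 e2,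
      MeasureTheory.integral_neg, MeasureTheory.integral_const_mul,
      MeasureTheory.integral_const_mul]
    rfl
  rw [hsplit] at hFTC
  linarith [hFTC]

lemma shift (a b z : ℝ) (ha : -1 < a) (hz : 0 < z) :
    J (a+1) (b-1) z = z * J a b z - z * J a (b-1) z := by
  have hint1 := integrableJ a b z ha hz
  have hint2 := integrableJ a (b-1) z ha hz
  rw [J, show z * J a b z - z * J a (b-1) z
      = ∫ t in Set.Ioi (0:ℝ), (z * (Real.exp (-t) * t ^ a * (1 + t / z) ^ b)
        - z * (Real.exp (-t) * t ^ a * (1 + t / z) ^ (b-1))) from ?_]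
  · apply setIntegral_congr_fun measurableSet_Ioi
    intro t ht
    have ht0 : (0:ℝ) < t := ht
    have hu : (0:ℝ) < 1 + t / z := by
      have : 0 < t / z := div_pos ht0 hz
      linarith
    simp only
    rw [Real.rpow_add_one (ne_of_gt ht0) a, Real.rpow_sub hu b 1, Real.rpow_one]
    field_simp
    ring
  · rw [MeasureTheory.integral_sub (hint1.const_mul z) (hint2.const_mul z),
      MeasureTheory.integral_const_mul, MeasureTheory.integral_const_mul]
    rfl

noncomputable def g0 (μ x : ℝ) : ℝ :=
  Real.exp x * Real.exp (-(Real.exp (-x))) * J μ (μ-1) (2*Real.exp (-x))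

noncomputable def g1 (μ x : ℝ) : ℝ :=
  Real.exp x * Real.exp (-(Real.exp (-x))) *
    ((1 + Real.exp (-x)) * J μ (μ-1) (2*Real.exp (-x))
      + (μ-1) * Real.exp x / 2 * J (μ+1) (μ-2) (2*Real.exp (-x)))

noncomputable def g2 (μ x : ℝ) : ℝ :=
  Real.exp x * Real.exp (-(Real.exp (-x))) *
    ((1 + Real.exp (-x)) * ((1 + Real.exp (-x)) * J μ (μ-1) (2*Real.exp (-x))
        + (μ-1) * Real.exp x / 2 * J (μ+1) (μ-2) (2*Real.exp (-x)))
      + (-(Real.exp (-x)) * J μ (μ-1) (2*Real.exp (-x))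
        + (1 + Real.exp (-x)) * ((μ-1) * Real.exp x / 2) * J (μ+1) (μ-2) (2*Real.exp (-x))
        + (μ-1) * Real.exp x / 2 * J (μ+1) (μ-2) (2*Real.exp (-x))
        + (μ-1) * Real.exp x / 2 *
            ((μ-2) * Real.exp x / 2 * J (μ+2) (μ-3) (2*Real.exp (-x)))))

lemma hasDerivAt_exp_neg (x : ℝ) :
    HasDerivAt (fun x : ℝ => Real.exp (-x)) (-Real.exp (-x)) x := by
  simpa using ((hasDerivAt_id x).neg).exp

lemma hasDerivAt_Jcomp (a b : ℝ) (ha : -1 < a) (x : ℝ) :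
    HasDerivAt (fun x => J a b (2 * Real.exp (-x)))
      (b * Real.exp x / 2 * J (a+1) (b-1) (2 * Real.exp (-x))) x := by
  have hw : (0:ℝ) < 2 * Real.exp (-x) := by positivity
  have hwd : HasDerivAt (fun x : ℝ => 2 * Real.exp (-x)) (-(2 * Real.exp (-x))) x := by
    simpa [mul_comm] using (hasDerivAt_exp_neg x).const_mul 2
  have h := (hasDerivAt_J a b ha hw).comp x hwd
  convert h using 1 <;> try rfl
  rw [Real.exp_neg]
  have hE : Real.exp x ≠ 0 := Real.exp_ne_zero x
  field_simp

lemma hasDerivAt_A (x : ℝ) :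
    HasDerivAt (fun x : ℝ => Real.exp x * Real.exp (-(Real.exp (-x))))
      (Real.exp x * Real.exp (-(Real.exp (-x))) * (1 + Real.exp (-x))) x := by
  have hP : HasDerivAt (fun x : ℝ => Real.exp (-(Real.exp (-x))))
      (Real.exp (-(Real.exp (-x))) * Real.exp (-x)) x := by
    simpa using ((hasDerivAt_exp_neg x).neg).exp
  have := (Real.hasDerivAt_exp x).mul hP
  convert this using 1 <;> try rfl
  ring

lemma hasDerivAt_g0 {μ : ℝ} (hμ : 0 < μ) (x : ℝ) :
    HasDerivAt (g0 μ) (g1 μ x) x := by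
  have h := (hasDerivAt_A x).mul (hasDerivAt_Jcomp μ (μ-1) (by linarith) x)
  have e1 : μ - 1 - 1 = μ - 2 := by ring
  rw [e1] at h
  convert h using 1 <;> try rfl
  simp only [g1]
  ring

lemma hasDerivAt_g1 {μ : ℝ} (hμ : 0 < μ) (x : ℝ) :
    HasDerivAt (g1 μ) (g2 μ x) x := by
  have hJ0 := hasDerivAt_Jcomp μ (μ-1) (by linarith : (-1:ℝ) < μ) x
  rw [show μ - 1 - 1 = μ - 2 by ring] at hJ0
  have hJ1 := hasDerivAt_Jcomp (μ+1) (μ-2) (by linarith : (-1:ℝ) < μ+1) x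
  rw [show μ + 1 + 1 = μ + 2 by ring, show μ - 2 - 1 = μ - 3 by ring] at hJ1
  have hc : HasDerivAt (fun x : ℝ => (μ-1) * Real.exp x / 2)
      ((μ-1) * Real.exp x / 2) x := by
    simpa [mul_div_assoc] using ((Real.hasDerivAt_exp x).const_mul (μ-1)).div_const 2
  have hone : HasDerivAt (fun x : ℝ => 1 + Real.exp (-x)) (-Real.exp (-x)) x :=
    (hasDerivAt_exp_neg x).const_add 1
  have hQ := (hone.mul hJ0).add (hc.mul hJ1)
  have h := (hasDerivAt_A x).mul hQ
  convert h using 1 <;> try rfl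
  simp only [g2, Pi.mul_apply, Pi.add_apply]
  ring

lemma g2_eq {μ : ℝ} (hμ : 0 < μ) (x : ℝ) :
    g2 μ x = (Real.exp (-x) + Real.exp (-x) * Real.exp (-x) + μ^2) * g0 μ x := by
  have hw : (0:ℝ) < 2 * Real.exp (-x) := by positivity
  have he : Real.exp (-x) * Real.exp x = 1 := by
    rw [← Real.exp_add]; simp
  have hr1 := shift μ (μ-1) (2*Real.exp (-x)) (by linarith) hw
  rw [show μ - 1 - 1 = μ - 2 by ring] at hr1
  have hr2 := shift (μ+1) (μ-2) (2*Real.exp (-x)) (by linarith) hw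
  rw [show μ + 1 + 1 = μ + 2 by ring, show μ - 2 - 1 = μ - 3 by ring] at hr2
  have hr3 := ibp (μ+1) (μ-2) (2*Real.exp (-x)) (by linarith) hw
  rw [show μ + 1 - 1 = μ by ring, show μ - 2 - 1 = μ - 3 by ring] at hr3
  have hinv : (2*Real.exp (-x))⁻¹ = Real.exp x / 2 := by
    rw [Real.exp_neg, mul_inv, inv_inv]; ring
  rw [div_eq_mul_inv, hinv] at hr3
  have s1 : Real.exp x * J (μ+1) (μ-2) (2*Real.exp (-x))
      = 2 * J μ (μ-1) (2*Real.exp (-x)) - 2 * J μ (μ-2) (2*Real.exp (-x)) := by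
    linear_combination Real.exp x * hr1
      + (2 * J μ (μ-1) (2*Real.exp (-x)) - 2 * J μ (μ-2) (2*Real.exp (-x))) * he
  have s2 : Real.exp x * J (μ+2) (μ-3) (2*Real.exp (-x))
      = 2 * J (μ+1) (μ-2) (2*Real.exp (-x)) - 2 * J (μ+1) (μ-3) (2*Real.exp (-x)) := by
    linear_combination Real.exp x * hr2
      + (2 * J (μ+1) (μ-2) (2*Real.exp (-x)) - 2 * J (μ+1) (μ-3) (2*Real.exp (-x))) * he
  simp only [g0, g2]
  linear_combination (Real.exp x * Real.exp (-(Real.exp (-x)))) *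
    ((μ^2-1)/2 * s1 + (μ-1)*(μ-2)*Real.exp x/4 * s2 + (μ-1) * hr3
      + (μ-1) * J (μ+1) (μ-2) (2*Real.exp (-x)) * he)

lemma whittaker_eq (μ z : ℝ) :
    whittakerW (-(1/2)) μ z
      = z ^ (-(1/2) : ℝ) * Real.exp (-z/2) / Real.Gamma (μ+1) * J μ (μ-1) z := by
  rw [whittakerW, J]
  simp only [show (1:ℝ)/2 + μ - -(1/2) = μ + 1 from by ring,
    show μ - -(1/2) - (1:ℝ)/2 = μ from by ring,
    show μ + -(1/2) - (1:ℝ)/2 = μ - 1 from by ring]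

lemma main_eq (μ x : ℝ) :
    Real.exp (x / 2) * whittakerW (-(1 / 2)) μ (2 * Real.exp (-x))
      = ((2:ℝ) ^ (-(1/2):ℝ) / Real.Gamma (μ+1)) * g0 μ x := by
  rw [whittaker_eq μ _]
  rw [Real.mul_rpow (by norm_num) (Real.exp_pos _).le]
  rw [← Real.exp_mul, show -x * -(1/2) = x/2 by ring]
  rw [show -(2 * Real.exp (-x))/2 = -(Real.exp (-x)) by ring]
  rw [g0]
  have hhalf : Real.exp (x/2) * Real.exp (x/2) = Real.exp x := by
    rw [← Real.exp_add, add_halves]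
  linear_combination ((2:ℝ) ^ (-(1/2):ℝ) / Real.Gamma (μ+1))
    * Real.exp (-(Real.exp (-x))) * J μ (μ - 1) (2 * Real.exp (-x)) * hhalf

end WhitAux

open WhitAux in
/-- For every `μ > 0`, the function `g(x) = e^{x/2} W_{-1/2, μ}(2 e^{-x})` is twice
differentiable and satisfies `g''(x) = (e^{-x} + e^{-2x} + μ²) g(x)` for all `x`. -/
theorem whittaker_morse_ode (μ : ℝ) (hμ : 0 < μ) :
    (∀ x : ℝ, DifferentiableAt ℝ
        (fun x => Real.exp (x / 2) * whittakerW (-(1 / 2)) μ (2 * Real.exp (-x))) x) ∧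
    (∀ x : ℝ, DifferentiableAt ℝ
        (deriv (fun x => Real.exp (x / 2) * whittakerW (-(1 / 2)) μ (2 * Real.exp (-x)))) x) ∧
    (∀ x : ℝ, deriv (deriv
        (fun x => Real.exp (x / 2) * whittakerW (-(1 / 2)) μ (2 * Real.exp (-x)))) x
      = (Real.exp (-x) + Real.exp (-2 * x) + μ ^ 2) *
          (Real.exp (x / 2) * whittakerW (-(1 / 2)) μ (2 * Real.exp (-x)))) := by
  set C : ℝ := (2:ℝ) ^ (-(1/2):ℝ) / Real.Gamma (μ+1) with hC
  have hfun : (fun x => Real.exp (x / 2) * whittakerW (-(1 / 2)) μ (2 * Real.exp (-x)))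
      = fun x => C * g0 μ x := funext fun x => main_eq μ x
  have hg0 : ∀ x : ℝ, HasDerivAt (fun x => C * g0 μ x) (C * g1 μ x) x :=
    fun x => (hasDerivAt_g0 hμ x).const_mul C
  have hd1 : deriv (fun x => C * g0 μ x) = fun x => C * g1 μ x :=
    funext fun x => (hg0 x).deriv
  have hg1 : ∀ x : ℝ, HasDerivAt (fun x => C * g1 μ x) (C * g2 μ x) x :=
    fun x => (hasDerivAt_g1 hμ x).const_mul C
  refine ⟨?_, ?_, ?_⟩
  · intro x
    rw [hfun]
    exact (hg0 x).differentiableAt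
  · intro x
    rw [hfun, hd1]
    exact (hg1 x).differentiableAt
  · intro x
    rw [hfun, hd1, (hg1 x).deriv, main_eq μ x, g2_eq hμ x]
    rw [show Real.exp (-2*x) = Real.exp (-x) * Real.exp (-x) from by
      rw [← Real.exp_add]; ring_nf]
    ring
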